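/- Let (X_n)_{n∈Z^d} be i.i.d. random variables with all moments finite, let B be a set of multi-indices with β_0 > 0 for each β ∈ B, and let (a_β)_{β∈B} be real coefficients, all but finitely many zero. Define Y_i = Σ_{β∈B} a_β (X^{β^i} − E[X^{β^i}]) for i ∈ Z^d. Then there exists m ∈ N such that the array (Y_i)_{i∈Z^d} is identically distributed and m-dependent, with E[Y_i] = 0 and E[|Y_i|³] < ∞. -/

import Mathlib

open MeasureTheory ProbabilityTheory

lemma aux_prod_le {α : Type*} (s : Finset α) (f : α → ℝ) (hf : ∀ n ∈ s, 0 ≤ f n)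
    (β : α → ℕ) (K : ℕ) (hK : ∑ n ∈ s, β n ≤ K) :
    ∏ n ∈ s, f n ^ β n ≤ 1 + ∑ n ∈ s, f n ^ K := by
  have hsumnn : 0 ≤ ∑ n ∈ s, f n ^ K :=
    Finset.sum_nonneg fun n hn => pow_nonneg (hf n hn) _
  rcases s.eq_empty_or_nonempty with rfl | hs
  · simp
  · obtain ⟨n₀, hn₀, hmax⟩ := s.exists_max_image f hs
    set M : ℝ := max 1 (f n₀) with hM
    have hM1 : (1:ℝ) ≤ M := le_max_left _ _
    have h1 : ∏ n ∈ s, f n ^ β n ≤ ∏ n ∈ s, M ^ β n := by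
      refine Finset.prod_le_prod (fun n hn => pow_nonneg (hf n hn) _) ?_
      exact fun n hn => pow_le_pow_left₀ (hf n hn) (le_trans (hmax n hn) (le_max_right _ _)) _
    have h2 : ∏ n ∈ s, M ^ β n = M ^ (∑ n ∈ s, β n) := by
      rw [← Finset.prod_pow_eq_pow_sum]
    have h3 : M ^ (∑ n ∈ s, β n) ≤ M ^ K := pow_le_pow_right₀ hM1 hK
    have h4 : M ^ K ≤ 1 + ∑ n ∈ s, f n ^ K := by
      rcases le_total (f n₀) 1 with h | h
      · have : M = 1 := max_eq_left h
        simp [this, hsumnn]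
      · have : M = f n₀ := max_eq_right h
        rw [this]
        have : f n₀ ^ K ≤ ∑ n ∈ s, f n ^ K :=
          Finset.single_le_sum (fun n hn => pow_nonneg (hf n hn) _) hn₀
        linarith
    calc ∏ n ∈ s, f n ^ β n ≤ ∏ n ∈ s, M ^ β n := h1
      _ = M ^ (∑ n ∈ s, β n) := h2
      _ ≤ M ^ K := h3
      _ ≤ _ := h4

lemma aux_sum_cube {α : Type*} (s : Finset α) (f : α → ℝ) (hf : ∀ n ∈ s, 0 ≤ f n) :
    (∑ n ∈ s, f n) ^ 3 ≤ (s.card : ℝ) ^ 3 * ∑ n ∈ s, f n ^ 3 := by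
  rcases s.eq_empty_or_nonempty with rfl | hs
  · simp
  · obtain ⟨n₀, hn₀, hmax⟩ := s.exists_max_image f hs
    have h1 : ∑ n ∈ s, f n ≤ (s.card : ℝ) * f n₀ := by
      calc ∑ n ∈ s, f n ≤ ∑ _n ∈ s, f n₀ := Finset.sum_le_sum hmax
        _ = (s.card : ℝ) * f n₀ := by rw [Finset.sum_const, nsmul_eq_mul]
    have hsnn : 0 ≤ ∑ n ∈ s, f n := Finset.sum_nonneg hf
    have h2 : (∑ n ∈ s, f n) ^ 3 ≤ ((s.card : ℝ) * f n₀) ^ 3 := pow_le_pow_left₀ hsnn h1 _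
    have h3 : f n₀ ^ 3 ≤ ∑ n ∈ s, f n ^ 3 :=
      Finset.single_le_sum (fun n hn => pow_nonneg (hf n hn) _) hn₀
    have hc : (0:ℝ) ≤ (s.card : ℝ) ^ 3 := by positivity
    calc (∑ n ∈ s, f n) ^ 3 ≤ ((s.card : ℝ) * f n₀) ^ 3 := h2
      _ = (s.card : ℝ) ^ 3 * f n₀ ^ 3 := by ring
      _ ≤ (s.card : ℝ) ^ 3 * ∑ n ∈ s, f n ^ 3 := by
          exact mul_le_mul_of_nonneg_left h3 hc

lemma aux_map_eq {d : ℕ} {Ω : Type*} [MeasurableSpace Ω] (μ : Measure Ω) [IsProbabilityMeasure μ]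
    (X : (Fin d → ℤ) → Ω → ℝ) (hmeas : ∀ n, Measurable (X n))
    (hindep : iIndepFun X μ)
    (hid : ∀ n m, μ.map (X n) = μ.map (X m))
    (T : Finset (Fin d → ℤ)) (i : Fin d → ℤ) :
    μ.map (fun ω (n : ↥T) => X (n.1 + i) ω) = μ.map (fun ω (n : ↥T) => X n.1 ω) := by
  classical
  have hVmeas : ∀ j : Fin d → ℤ, Measurable (fun ω (n : ↥T) => X (n.1 + j) ω) :=
    fun j => measurable_pi_lambda _ fun n => hmeas _
  have claim : ∀ (j : Fin d → ℤ) (t : ↥T → Set ℝ), (∀ n, MeasurableSet (t n)) →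
      (μ.map (fun ω (n : ↥T) => X (n.1 + j) ω)) (Set.univ.pi t)
        = ∏ n ∈ T.attach, (μ.map (X 0)) (t n) := by
    intro j t ht
    rw [Measure.map_apply (hVmeas j) (MeasurableSet.univ_pi ht)]
    set sets : (Fin d → ℤ) → Set ℝ :=
      fun x => if h : x - j ∈ T then t ⟨x - j, h⟩ else Set.univ with hsets
    have hset : (fun ω (n : ↥T) => X (n.1 + j) ω) ⁻¹' (Set.univ.pi t)
        = ⋂ x ∈ T.image (· + j), X x ⁻¹' (sets x) := by
      ext ω
      simp only [Set.mem_preimage, Set.mem_pi, Set.mem_univ, forall_true_left,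
        Set.mem_iInter, Finset.mem_image]
      constructor
      · rintro h x ⟨n, hn, rfl⟩
        simp only [hsets, add_sub_cancel_right, hn, dif_pos]
        exact h ⟨n, hn⟩
      · intro h n
        have := h (n.1 + j) ⟨n.1, n.2, rfl⟩
        simpa only [hsets, add_sub_cancel_right, n.2, dif_pos, Subtype.coe_eta] using this
    have hsm : ∀ x, x ∈ T.image (· + j) → MeasurableSet (sets x) := by
      intro x _
      by_cases h : x - j ∈ T
      · simpa only [hsets, dif_pos h] using ht _
      · simp only [hsets, dif_neg h]; exact MeasurableSet.univ
    rw [hset, hindep.measure_inter_preimage_eq_mul _ hsm,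
      Finset.prod_image (by intro x _ y _ h; exact add_right_cancel h)]
    rw [← Finset.prod_attach]
    refine Finset.prod_congr rfl fun n _ => ?_
    have h1 : sets (n.1 + j) = t n := by
      simp only [hsets, add_sub_cancel_right, n.2, dif_pos, Subtype.coe_eta]
    rw [h1, ← Measure.map_apply (hmeas _) (ht n), hid (n.1 + j) 0]
  have hV0 : Measurable (fun ω (n : ↥T) => X n.1 ω) := measurable_pi_lambda _ fun n => hmeas _
  have claim0 : ∀ (t : ↥T → Set ℝ), (∀ n, MeasurableSet (t n)) →
      (μ.map (fun ω (n : ↥T) => X n.1 ω)) (Set.univ.pi t)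
        = ∏ n ∈ T.attach, (μ.map (X 0)) (t n) := by
    intro t ht
    have := claim 0 t ht
    simpa only [add_zero] using this
  haveI := Measure.isProbabilityMeasure_map (μ := μ) (hVmeas i).aemeasurable
  haveI := Measure.isProbabilityMeasure_map (μ := μ) hV0.aemeasurable
  refine ext_of_generate_finite _ generateFrom_pi.symm isPiSystem_pi ?_ (by simp)
  rintro _ ⟨t, ht, rfl⟩
  rw [claim i t (fun n => ht n (Set.mem_univ n)), claim0 t (fun n => ht n (Set.mem_univ n))]


/-- The array `(Y_i)_{i∈ℤ^d}` is `m`-dependent: for any two finite index sets `I, J` at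
`ℓ¹`-distance greater than `m` from each other, the families `(Y_i)_{i∈I}` and `(Y_j)_{j∈J}`
are independent. -/
def MDependent {d : ℕ} {Ω : Type*} [MeasurableSpace Ω] (μ : Measure Ω) (m : ℕ)
    (Y : (Fin d → ℤ) → Ω → ℝ) : Prop :=
  ∀ I J : Finset (Fin d → ℤ),
    (∀ i ∈ I, ∀ j ∈ J, (m : ℤ) < ∑ v : Fin d, |i v - j v|) →
    IndepFun (fun ω (i : I) => Y i ω) (fun ω (j : J) => Y j ω) μ

/-- Let `(X_n)_{n∈ℤ^d}` be i.i.d. with all moments finite, and let `a` be a finitely supported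
real coefficient function on multi-indices, supported on multi-indices `β` with `β_0 > 0`.
Then `Y_i = Σ_β a_β (X^{β^i} − E[X^{β^i}])` defines an identically distributed `m`-dependent
array (for some `m`) with mean zero and finite third moments. -/
theorem linear_statistic_array_mDependent {d : ℕ} {Ω : Type*} [MeasurableSpace Ω]
    (μ : Measure Ω) [IsProbabilityMeasure μ]
    (X : (Fin d → ℤ) → Ω → ℝ) (hmeas : ∀ n, Measurable (X n))
    (hindep : iIndepFun X μ)
    (hid : ∀ n m, μ.map (X n) = μ.map (X m))
    (hmean : ∀ n, ∫ ω, X n ω ∂μ = 0)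
    (hmom : ∀ n k, Integrable (fun ω => |X n ω| ^ k) μ)
    (a : ((Fin d → ℤ) →₀ ℕ) →₀ ℝ) (hB : ∀ β ∈ a.support, 0 < β 0)
    (Y : (Fin d → ℤ) → Ω → ℝ)
    (hY : ∀ i ω, Y i ω = ∑ β ∈ a.support, a β *
      ((∏ n ∈ β.support, X (n + i) ω ^ β n) -
        ∫ ω', ∏ n ∈ β.support, X (n + i) ω' ^ β n ∂μ)) :
    ∃ m : ℕ, MDependent μ m Y ∧ (∀ i j, μ.map (Y i) = μ.map (Y j)) ∧
      (∀ i, ∫ ω, Y i ω ∂μ = 0) ∧ ∀ i, Integrable (fun ω => |Y i ω| ^ 3) μ := by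
  classical
  set T : Finset (Fin d → ℤ) := a.support.biUnion Finsupp.support with hTdef
  have hTmem : ∀ {β : (Fin d → ℤ) →₀ ℕ} {n : Fin d → ℤ},
      β ∈ a.support → n ∈ β.support → n ∈ T :=
    fun hβ hn => Finset.mem_biUnion.2 ⟨_, hβ, hn⟩
  set K : ℕ := a.support.sup (fun β => ∑ n ∈ β.support, β n) with hKdef
  set c : ((Fin d → ℤ) →₀ ℕ) → (Fin d → ℤ) → ℝ :=
    fun β i => ∫ ω, ∏ n ∈ β.support, X (n + i) ω ^ β n ∂μ with hcdef
  have hY' : ∀ i ω, Y i ω = ∑ β ∈ a.support, a β *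
      ((∏ n ∈ β.support, X (n + i) ω ^ β n) - c β i) := hY
  -- measurability of Y
  have hYm : ∀ i, Measurable (Y i) := by
    intro i
    have : Y i = fun ω => ∑ β ∈ a.support, a β *
        ((∏ n ∈ β.support, X (n + i) ω ^ β n) - c β i) := funext (hY' i)
    rw [this]
    exact Finset.measurable_sum _ fun β _ =>
      (((Finset.measurable_prod _ fun n _ => (hmeas _).pow_const _).sub
        measurable_const).const_mul _)
  -- pointwise bound on products
  have hprodle : ∀ (i : Fin d → ℤ) (β : (Fin d → ℤ) →₀ ℕ), β ∈ a.support → ∀ ω,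
      |∏ n ∈ β.support, X (n + i) ω ^ β n| ≤ 1 + ∑ n ∈ T, |X (n + i) ω| ^ K := by
    intro i β hβ ω
    have h1 : |∏ n ∈ β.support, X (n + i) ω ^ β n|
        = ∏ n ∈ β.support, |X (n + i) ω| ^ β n := by
      rw [Finset.abs_prod]
      exact Finset.prod_congr rfl fun n _ => abs_pow _ _
    rw [h1]
    have h2 := aux_prod_le β.support (fun n => |X (n + i) ω|)
      (fun n _ => abs_nonneg _) β K (Finset.le_sup (f := fun β => ∑ n ∈ β.support, β n) hβ)
    refine h2.trans ?_
    have h3 : ∑ n ∈ β.support, |X (n + i) ω| ^ K ≤ ∑ n ∈ T, |X (n + i) ω| ^ K :=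
      Finset.sum_le_sum_of_subset_of_nonneg (fun n hn => hTmem hβ hn)
        (fun n _ _ => pow_nonneg (abs_nonneg _) _)
    linarith
  -- integrability of products
  have hBint : ∀ i : Fin d → ℤ,
      Integrable (fun ω => 1 + ∑ n ∈ T, |X (n + i) ω| ^ K) μ :=
    fun i => (integrable_const 1).add (integrable_finset_sum _ fun n _ => hmom (n + i) K)
  have hprodInt : ∀ (i : Fin d → ℤ) (β : (Fin d → ℤ) →₀ ℕ), β ∈ a.support →
      Integrable (fun ω => ∏ n ∈ β.support, X (n + i) ω ^ β n) μ := by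
    intro i β hβ
    refine (hBint i).mono' ?_ (Filter.Eventually.of_forall fun ω => ?_)
    · exact (Finset.measurable_prod _ fun n _ =>
        (hmeas _).pow_const _).aestronglyMeasurable
    · simpa only [Real.norm_eq_abs] using hprodle i β hβ ω
  -- the vector of window variables
  set V : (Fin d → ℤ) → Ω → (↥T → ℝ) := fun i ω n => X (n.1 + i) ω with hVdef
  have hVmeas : ∀ i, Measurable (V i) := fun i => measurable_pi_lambda _ fun n => hmeas _
  have hmapV : ∀ i, μ.map (V i) = μ.map (fun ω (n : ↥T) => X n.1 ω) :=
    fun i => aux_map_eq μ X hmeas hindep hid T i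
  -- invariance of the constants
  have hcinv : ∀ (β : (Fin d → ℤ) →₀ ℕ), β ∈ a.support → ∀ i, c β i = c β 0 := by
    intro β hβ i
    set g : (↥T → ℝ) → ℝ :=
      fun x => ∏ n ∈ β.support, (if h : n ∈ T then x ⟨n, h⟩ else 0) ^ β n with hgdef
    have hgm : Measurable g := by
      refine Finset.measurable_prod _ fun n _ => ?_
      by_cases h : n ∈ T
      · simp only [dif_pos h]; exact (measurable_pi_apply _).pow_const _
      · simp only [dif_neg h]; exact measurable_const
    have hgc : ∀ j ω, ∏ n ∈ β.support, X (n + j) ω ^ β n = g (V j ω) := by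
      intro j ω
      refine Finset.prod_congr rfl fun n hn => ?_
      rw [dif_pos (hTmem hβ hn)]
    have key : ∀ j : Fin d → ℤ, c β j = ∫ x, g x ∂(μ.map (fun ω (n : ↥T) => X n.1 ω)) := by
      intro j
      rw [hcdef]
      simp only
      rw [show (fun ω => ∏ n ∈ β.support, X (n + j) ω ^ β n) = fun ω => g (V j ω) from
        funext (hgc j)]
      rw [← integral_map (hVmeas j).aemeasurable hgm.aestronglyMeasurable, hmapV j]
    rw [key i, key 0]
  -- identical distribution
  have hident : ∀ i j, μ.map (Y i) = μ.map (Y j) := by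
    intro i j
    set gY : (↥T → ℝ) → ℝ := fun x => ∑ β ∈ a.support, a β *
      ((∏ n ∈ β.support, (if h : n ∈ T then x ⟨n, h⟩ else 0) ^ β n) - c β 0) with hgYdef
    have hgYm : Measurable gY := by
      refine Finset.measurable_sum _ fun β _ => Measurable.const_mul (Measurable.sub ?_ measurable_const) _
      refine Finset.measurable_prod _ fun n _ => ?_
      by_cases h : n ∈ T
      · simp only [dif_pos h]; exact (measurable_pi_apply _).pow_const _
      · simp only [dif_neg h]; exact measurable_const
    have hYcomp : ∀ k, Y k = gY ∘ (V k) := by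
      intro k
      funext ω
      rw [hY' k ω, hgYdef]
      simp only [Function.comp]
      refine Finset.sum_congr rfl fun β hβ => ?_
      rw [hcinv β hβ k]
      congr 1
      rw [sub_left_inj]
      refine Finset.prod_congr rfl fun n hn => ?_
      rw [dif_pos (hTmem hβ hn)]
    rw [hYcomp i, hYcomp j,
      ← Measure.map_map hgYm (hVmeas i), ← Measure.map_map hgYm (hVmeas j), hmapV i, hmapV j]
  -- mean zero
  have hmean0 : ∀ i, ∫ ω, Y i ω ∂μ = 0 := by
    intro i
    rw [show (fun ω => Y i ω) = fun ω => ∑ β ∈ a.support, a β *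
        ((∏ n ∈ β.support, X (n + i) ω ^ β n) - c β i) from funext (hY' i)]
    have hint : ∀ β ∈ a.support, Integrable
        (fun ω => a β * ((∏ n ∈ β.support, X (n + i) ω ^ β n) - c β i)) μ :=
      fun β hβ => (((hprodInt i β hβ).sub (integrable_const _)).const_mul _)
    rw [integral_finset_sum _ hint]
    refine Finset.sum_eq_zero fun β hβ => ?_
    rw [integral_const_mul, integral_sub (hprodInt i β hβ) (integrable_const _),
      integral_const]
    simp [hcdef]
  -- third moments
  have hthird : ∀ i, Integrable (fun ω => |Y i ω| ^ 3) μ := by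
    intro i
    set D : ℝ := ∑ β ∈ a.support, |a β| * (1 + |c β i|) with hDdef
    have hD0 : 0 ≤ D :=
      Finset.sum_nonneg fun β _ => mul_nonneg (abs_nonneg _)
        (by positivity)
    set S : Ω → ℝ := fun ω => ∑ n ∈ T, |X (n + i) ω| ^ K with hSdef
    have hS0 : ∀ ω, 0 ≤ S ω := fun ω =>
      Finset.sum_nonneg fun n _ => pow_nonneg (abs_nonneg _) _
    have hYB : ∀ ω, |Y i ω| ≤ D * (1 + S ω) := by
      intro ω
      have h1 : |Y i ω| ≤ ∑ β ∈ a.support, |a β| * (|∏ n ∈ β.support, X (n + i) ω ^ β n| + |c β i|) := by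
        rw [hY' i ω]
        refine (Finset.abs_sum_le_sum_abs _ _).trans (Finset.sum_le_sum fun β _ => ?_)
        rw [abs_mul]
        exact mul_le_mul_of_nonneg_left (abs_sub _ _) (abs_nonneg _)
      refine h1.trans ?_
      rw [hDdef, Finset.sum_mul]
      refine Finset.sum_le_sum fun β hβ => ?_
      have h2 : |∏ n ∈ β.support, X (n + i) ω ^ β n| ≤ 1 + S ω := hprodle i β hβ ω
      have h3 : (1:ℝ) ≤ 1 + S ω := by linarith [hS0 ω]
      have h4 : 0 ≤ |a β| := abs_nonneg _
      have h5 : 0 ≤ |c β i| := abs_nonneg _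
      have h6 : |∏ n ∈ β.support, X (n + i) ω ^ β n| + |c β i| ≤ (1 + |c β i|) * (1 + S ω) := by
        nlinarith [mul_nonneg h5 (hS0 ω)]
      calc |a β| * (|∏ n ∈ β.support, X (n + i) ω ^ β n| + |c β i|)
          ≤ |a β| * ((1 + |c β i|) * (1 + S ω)) := mul_le_mul_of_nonneg_left h6 h4
        _ = |a β| * (1 + |c β i|) * (1 + S ω) := by ring
    have hcube : ∀ ω, |Y i ω| ^ 3 ≤
        D ^ 3 * (4 * (1 + (T.card : ℝ) ^ 3 * ∑ n ∈ T, |X (n + i) ω| ^ (K * 3))) := by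
      intro ω
      have h1 : |Y i ω| ^ 3 ≤ (D * (1 + S ω)) ^ 3 :=
        pow_le_pow_left₀ (abs_nonneg _) (hYB ω) 3
      have h2 : (1 + S ω) ^ 3 ≤ 4 * (1 + S ω ^ 3) := by nlinarith [sq_nonneg (S ω - 1), hS0 ω]
      have h3 : S ω ^ 3 ≤ (T.card : ℝ) ^ 3 * ∑ n ∈ T, |X (n + i) ω| ^ (K * 3) := by
        have := aux_sum_cube T (fun n => |X (n + i) ω| ^ K)
          (fun n _ => pow_nonneg (abs_nonneg _) _)
        rw [hSdef]
        refine this.trans (le_of_eq ?_)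
        congr 1
        exact Finset.sum_congr rfl fun n _ => by rw [← pow_mul]
      calc |Y i ω| ^ 3 ≤ (D * (1 + S ω)) ^ 3 := h1
        _ = D ^ 3 * (1 + S ω) ^ 3 := by ring
        _ ≤ D ^ 3 * (4 * (1 + S ω ^ 3)) := by
            exact mul_le_mul_of_nonneg_left h2 (by positivity)
        _ ≤ D ^ 3 * (4 * (1 + (T.card : ℝ) ^ 3 * ∑ n ∈ T, |X (n + i) ω| ^ (K * 3))) := by
            have h4 : (0:ℝ) ≤ D ^ 3 := by positivity
            nlinarith [h3]
    have hGint : Integrable (fun ω =>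
        D ^ 3 * (4 * (1 + (T.card : ℝ) ^ 3 * ∑ n ∈ T, |X (n + i) ω| ^ (K * 3)))) μ := by
      refine Integrable.const_mul (Integrable.const_mul ?_ _) _
      exact (integrable_const 1).add
        ((integrable_finset_sum _ fun n _ => hmom (n + i) (K * 3)).const_mul _)
    refine hGint.mono' ((hYm i).abs.pow_const 3).aestronglyMeasurable
      (Filter.Eventually.of_forall fun ω => ?_)
    rw [Real.norm_eq_abs, abs_of_nonneg (pow_nonneg (abs_nonneg (Y i ω)) 3)]
    exact hcube ω
  -- m-dependence
  set r : ℕ := T.sup (fun n => (∑ v, |n v|).toNat) with hrdef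
  have hrT : ∀ n ∈ T, ∑ v, |n v| ≤ (r : ℤ) := by
    intro n hn
    have h1 : (∑ v, |n v|).toNat ≤ r := Finset.le_sup (f := fun n => (∑ v, |n v|).toNat) hn
    have h2 : ∑ v, |n v| ≤ ((∑ v, |n v|).toNat : ℤ) := Int.self_le_toNat _
    exact h2.trans (by exact_mod_cast h1)
  refine ⟨2 * r, ?_, hident, hmean0, hthird⟩
  intro I J hfar
  set SI : Finset (Fin d → ℤ) := I.biUnion fun i => T.image (· + i) with hSIdef
  set SJ : Finset (Fin d → ℤ) := J.biUnion fun j => T.image (· + j) with hSJdef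
  have hdisj : Disjoint SI SJ := by
    rw [Finset.disjoint_left]
    rintro x hxI hxJ
    rw [hSIdef, Finset.mem_biUnion] at hxI
    rw [hSJdef, Finset.mem_biUnion] at hxJ
    obtain ⟨i, hi, hxi⟩ := hxI
    obtain ⟨j, hj, hxj⟩ := hxJ
    rw [Finset.mem_image] at hxi hxj
    obtain ⟨n, hn, rfl⟩ := hxi
    obtain ⟨n', hn', heq⟩ := hxj
    have hfar' := hfar i hi j hj
    have hsum : ∑ v : Fin d, |i v - j v| ≤ 2 * (r : ℤ) := by
      have hij : ∀ v, i v - j v = n' v - n v := by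
        intro v
        have := congrFun heq v
        simp only [Pi.add_apply] at this
        linarith [this]
      calc ∑ v : Fin d, |i v - j v| = ∑ v : Fin d, |n' v - n v| := by
            exact Finset.sum_congr rfl fun v _ => by rw [hij v]
        _ ≤ ∑ v : Fin d, (|n' v| + |n v|) :=
            Finset.sum_le_sum fun v _ => abs_sub _ _
        _ = (∑ v : Fin d, |n' v|) + ∑ v : Fin d, |n v| := Finset.sum_add_distrib
        _ ≤ (r : ℤ) + (r : ℤ) := add_le_add (hrT n' hn') (hrT n hn)
        _ = 2 * (r : ℤ) := by ring
    have : ((2 * r : ℕ) : ℤ) = 2 * (r : ℤ) := by push_cast; ring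
    rw [this] at hfar'
    linarith
  have hXind := hindep.indepFun_finset SI SJ hdisj hmeas
  set ψ : (S' : Finset (Fin d → ℤ)) → (I' : Finset (Fin d → ℤ)) → (↥S' → ℝ) → (↥I' → ℝ) :=
    fun S' I' z i => ∑ β ∈ a.support, a β *
      ((∏ n ∈ β.support, (if h : n + i.1 ∈ S' then z ⟨n + i.1, h⟩ else 0) ^ β n) - c β i.1)
    with hψdef
  have hψm : ∀ S' I', Measurable (ψ S' I') := by
    intro S' I'
    refine measurable_pi_lambda _ fun i => Finset.measurable_sum _ fun β _ =>
      Measurable.const_mul (Measurable.sub ?_ measurable_const) _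
    refine Finset.measurable_prod _ fun n _ => ?_
    by_cases h : n + i.1 ∈ S'
    · simp only [dif_pos h]; exact (measurable_pi_apply _).pow_const _
    · simp only [dif_neg h]; exact measurable_const
  have hcompI : (fun ω (i : I) => Y i ω) = (ψ SI I) ∘ (fun ω (x : SI) => X x ω) := by
    funext ω i
    simp only [Function.comp, hψdef]
    rw [hY' i.1 ω]
    refine Finset.sum_congr rfl fun β hβ => ?_
    congr 1
    rw [sub_left_inj]
    refine Finset.prod_congr rfl fun n hn => ?_
    have hmem : n + i.1 ∈ SI := by
      rw [hSIdef, Finset.mem_biUnion]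
      exact ⟨i.1, i.2, Finset.mem_image.2 ⟨n, hTmem hβ hn, rfl⟩⟩
    simp only [dif_pos hmem]
  have hcompJ : (fun ω (j : J) => Y j ω) = (ψ SJ J) ∘ (fun ω (x : SJ) => X x ω) := by
    funext ω j
    simp only [Function.comp, hψdef]
    rw [hY' j.1 ω]
    refine Finset.sum_congr rfl fun β hβ => ?_
    congr 1
    rw [sub_left_inj]
    refine Finset.prod_congr rfl fun n hn => ?_
    have hmem : n + j.1 ∈ SJ := by
      rw [hSJdef, Finset.mem_biUnion]
      exact ⟨j.1, j.2, Finset.mem_image.2 ⟨n, hTmem hβ hn, rfl⟩⟩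
    simp only [dif_pos hmem]
  rw [hcompI, hcompJ]
  exact hXind.comp (hψm SI I) (hψm SJ J)
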